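/- In the setting of an algebra of RS type: let R be a Hecke symmetry on ℂ^N with parameter q ∈ ℂ \ {0,1,−1}, m, n nonnegative integers, α = q^{n−m}·(q^{m−n} − q^{n−m})/(q − q⁻¹), 𝒜 an associative unital ℂ-algebra, and C a fixed N×N complex matrix satisfying (i) Tr_{R(2)} R₁₂ = I_N, (ii) Tr_R I_N = α, (iii) Tr_{R(2)}(R₁₂·A₁·R₁₂⁻¹) = (Tr_R A)·I_N = Tr_{R(2)}(R₁₂⁻¹·A₁·R₁₂) for every N×N matrix A over 𝒜. Set f(x) = −(q−q⁻¹)x/(x−1), ℛ(x) = R + f(x)·I, and let c ∈ ℂ \ {0}. Suppose L(u) (u ∈ ℂ \ {0}) satisfies ℛ(u/v)·L₁(u)·ℛ(vc/u)·L₁(v) = L₁(v)·ℛ(uc/v)·L₁(u)·ℛ(v/u) whenever all four arguments differ from 1. Assume additionally the nondegeneracy condition: for all admissible u ≠ v, if λ·L(u)L(v) + μ·L(v)L(u) = 0 with λ, μ ∈ ℂ then λ = μ = 0. Then (Tr_R L(u))·L(v) = L(v)·(Tr_R L(u)) holds for all admissible u, v if and only if c = q^{2(m−n)}. -/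

import Mathlib

open Matrix

/-- `op12 X = X ⊗ I_N` acting on `V ⊗ V ⊗ V`. -/
def op12 {N : ℕ} (X : Matrix (Fin N × Fin N) (Fin N × Fin N) ℂ) :
    Matrix (Fin N × Fin N × Fin N) (Fin N × Fin N × Fin N) ℂ :=
  Matrix.of fun a b => X (a.1, a.2.1) (b.1, b.2.1) * (if a.2.2 = b.2.2 then 1 else 0)

/-- `op23 X = I_N ⊗ X` acting on `V ⊗ V ⊗ V`. -/
def op23 {N : ℕ} (X : Matrix (Fin N × Fin N) (Fin N × Fin N) ℂ) :
    Matrix (Fin N × Fin N × Fin N) (Fin N × Fin N × Fin N) ℂ :=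
  Matrix.of fun a b => (if a.1 = b.1 then 1 else 0) * X (a.2.1, a.2.2) (b.2.1, b.2.2)

/-- For an `N×N` matrix `X` with entries in `A`, `leg1 X = X ⊗ I_N`. -/
def leg1 {N : ℕ} {A : Type*} [Semiring A] (X : Matrix (Fin N) (Fin N) A) :
    Matrix (Fin N × Fin N) (Fin N × Fin N) A :=
  Matrix.of fun a b => X a.1 b.1 * (if a.2 = b.2 then 1 else 0)

/-- Embedding of a complex matrix into matrices over a `ℂ`-algebra `A`. -/
def emb {n : Type*} {A : Type*} [Semiring A] [Algebra ℂ A] (R : Matrix n n ℂ) :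
    Matrix n n A :=
  R.map (algebraMap ℂ A)

/-- The `R`-trace: `Tr_R X = Σ_{i,j} C^i_j X^j_i`. -/
def trR {N : ℕ} {A : Type*} [Ring A] [Algebra ℂ A]
    (C : Matrix (Fin N) (Fin N) ℂ) (X : Matrix (Fin N) (Fin N) A) : A :=
  ∑ i, ∑ j, C i j • X j i

/-- The partial `R`-trace over the second factor. -/
def trR2 {N : ℕ} {A : Type*} [Ring A] [Algebra ℂ A]
    (C : Matrix (Fin N) (Fin N) ℂ) (M : Matrix (Fin N × Fin N) (Fin N × Fin N) A) :
    Matrix (Fin N) (Fin N) A :=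
  Matrix.of fun r s => ∑ a, ∑ b, C a b • M (r, b) (s, a)


/-- The shift function of the Baxterized trigonometric `R`-matrix:
`f(x) = −(q−q⁻¹)x/(x−1)`. -/
noncomputable def fshift (q x : ℂ) : ℂ := -(q - q⁻¹) * x / (x - 1)

/-- `α = q^{n−m}·(m−n)_q`, the `R`-trace of the identity for bi-rank `(m|n)`. -/
noncomputable def alphaHecke (q : ℂ) (m n : ℕ) : ℂ :=
  q ^ ((n : ℤ) - m) * (q ^ ((m : ℤ) - n) - q ^ ((n : ℤ) - m)) / (q - q⁻¹)

set_option linter.unusedSectionVars false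

section Helpers

variable {N : ℕ} {A : Type*} [Ring A] [Algebra ℂ A]

theorem sum_swap3 {B : Type*} [AddCommMonoid B] (F : Fin N → Fin N → Fin N → B) :
    ∑ a, ∑ b, ∑ k, F a b k = ∑ k, ∑ a, ∑ b, F a b k :=
  calc ∑ a, ∑ b, ∑ k, F a b k = ∑ a, ∑ k, ∑ b, F a b k :=
        Finset.sum_congr rfl fun _ _ => Finset.sum_comm
    _ = ∑ k, ∑ a, ∑ b, F a b k := Finset.sum_comm

theorem trR2_add (C : Matrix (Fin N) (Fin N) ℂ)
    (M M' : Matrix (Fin N × Fin N) (Fin N × Fin N) A) :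
    trR2 C (M + M') = trR2 C M + trR2 C M' := by
  ext r s
  simp [trR2, smul_add, Finset.sum_add_distrib]

theorem trR2_sub (C : Matrix (Fin N) (Fin N) ℂ)
    (M M' : Matrix (Fin N × Fin N) (Fin N × Fin N) A) :
    trR2 C (M - M') = trR2 C M - trR2 C M' := by
  ext r s
  simp [trR2, smul_sub, Finset.sum_sub_distrib]

theorem trR2_csmul (C : Matrix (Fin N) (Fin N) ℂ) (s : ℂ)
    (M : Matrix (Fin N × Fin N) (Fin N × Fin N) A) :
    trR2 C (s • M) = s • trR2 C M := by
  ext r s'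
  simp [trR2, Finset.smul_sum, smul_comm s]

theorem mul_leg1_apply (X : Matrix (Fin N) (Fin N) A)
    (M : Matrix (Fin N × Fin N) (Fin N × Fin N) A) (r b s a : Fin N) :
    (M * leg1 X) (r, b) (s, a) = ∑ k, M (r, b) (k, a) * X k s := by
  rw [Matrix.mul_apply, Fintype.sum_prod_type]
  refine Finset.sum_congr rfl fun k _ => ?_
  simp only [leg1, Matrix.of_apply, mul_ite, mul_one, mul_zero, ← mul_assoc]
  rw [Finset.sum_ite_eq']
  simp [mul_comm]

theorem leg1_mul_apply (X : Matrix (Fin N) (Fin N) A)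
    (M : Matrix (Fin N × Fin N) (Fin N × Fin N) A) (r b s a : Fin N) :
    (leg1 X * M) (r, b) (s, a) = ∑ k, X r k * M (k, b) (s, a) := by
  rw [Matrix.mul_apply, Fintype.sum_prod_type]
  refine Finset.sum_congr rfl fun k _ => ?_
  simp only [leg1, Matrix.of_apply, ite_mul, mul_ite, mul_one, mul_zero, zero_mul, mul_assoc]
  rw [Finset.sum_ite_eq]
  simp

theorem trR2_leg1_mul (C : Matrix (Fin N) (Fin N) ℂ) (X : Matrix (Fin N) (Fin N) A)
    (M : Matrix (Fin N × Fin N) (Fin N × Fin N) A) :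
    trR2 C (leg1 X * M) = X * trR2 C M := by
  ext r s
  have lhs : trR2 C (leg1 X * M) r s = ∑ a, ∑ b, ∑ k, C a b • (X r k * M (k, b) (s, a)) := by
    simp only [trR2, Matrix.of_apply, leg1_mul_apply, Finset.smul_sum]
  have rhs : (X * trR2 C M) r s = ∑ k, ∑ a, ∑ b, C a b • (X r k * M (k, b) (s, a)) := by
    simp only [Matrix.mul_apply, trR2, Matrix.of_apply, Finset.mul_sum, mul_smul_comm]
  rw [lhs, rhs]
  exact sum_swap3 _

theorem trR2_mul_leg1 (C : Matrix (Fin N) (Fin N) ℂ) (X : Matrix (Fin N) (Fin N) A)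
    (M : Matrix (Fin N × Fin N) (Fin N × Fin N) A) :
    trR2 C (M * leg1 X) = trR2 C M * X := by
  ext r s
  have lhs : trR2 C (M * leg1 X) r s = ∑ a, ∑ b, ∑ k, C a b • (M (r, b) (k, a) * X k s) := by
    simp only [trR2, Matrix.of_apply, mul_leg1_apply, Finset.smul_sum]
  have rhs : (trR2 C M * X) r s = ∑ k, ∑ a, ∑ b, C a b • (M (r, b) (k, a) * X k s) := by
    simp only [Matrix.mul_apply, trR2, Matrix.of_apply, Finset.sum_mul, smul_mul_assoc]
  rw [lhs, rhs]
  exact sum_swap3 _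

end Helpers
section Helpers2

variable {N : ℕ} {A : Type*} [Ring A] [Algebra ℂ A]

theorem trR2_emb (C : Matrix (Fin N) (Fin N) ℂ) (M : Matrix (Fin N × Fin N) (Fin N × Fin N) ℂ) :
    trR2 C (emb M : Matrix (Fin N × Fin N) (Fin N × Fin N) A) = emb (trR2 C M) := by
  ext r s
  simp only [trR2, emb, Matrix.map_apply, Matrix.of_apply, map_sum, Algebra.smul_def,
    _root_.map_mul, smul_eq_mul, Algebra.algebraMap_self, RingHom.id_apply]

theorem trR2_one' (C : Matrix (Fin N) (Fin N) ℂ) :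
    trR2 C (1 : Matrix (Fin N × Fin N) (Fin N × Fin N) A) = (∑ i, C i i) • 1 := by
  ext r s
  simp only [trR2, Matrix.of_apply, Matrix.one_apply, Prod.mk.injEq, Matrix.smul_apply]
  by_cases h : r = s
  · subst h
    simp [Finset.sum_ite_eq', Matrix.one_apply, Finset.sum_smul]
  · simp [h, Matrix.one_apply, Ne.symm h]

theorem trR_one' (C : Matrix (Fin N) (Fin N) ℂ) :
    trR C (1 : Matrix (Fin N) (Fin N) ℂ) = ∑ i, C i i := by
  simp [trR, Matrix.one_apply]

theorem emb_mul {n : Type*} [Fintype n] (M M' : Matrix n n ℂ) :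
    (emb (M * M') : Matrix n n A) = emb M * emb M' := by
  simp [emb, Matrix.map_mul]

theorem emb_one {n : Type*} [Fintype n] [DecidableEq n] :
    (emb (1 : Matrix n n ℂ) : Matrix n n A) = 1 := by
  simp [emb, Matrix.map_one]

theorem emb_add {n : Type*} (M M' : Matrix n n ℂ) :
    (emb (M + M') : Matrix n n A) = emb M + emb M' := by
  ext i j; simp [emb]

theorem emb_sub {n : Type*} (M M' : Matrix n n ℂ) :
    (emb (M - M') : Matrix n n A) = emb M - emb M' := by
  ext i j; simp [emb]

theorem emb_smul {n : Type*} (s : ℂ) (M : Matrix n n ℂ) :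
    (emb (s • M) : Matrix n n A) = s • emb M := by
  ext i j; simp [emb, Algebra.smul_def]

end Helpers2
section Helpers3

variable {N : ℕ} {A : Type*} [Ring A] [Algebra ℂ A]

theorem leg1_mul (X Y : Matrix (Fin N) (Fin N) A) :
    leg1 (X * Y) = leg1 X * leg1 Y := by
  ext ⟨r, b⟩ ⟨s, a⟩
  rw [show (leg1 X * leg1 Y) (r, b) (s, a) = ∑ k, X r k * leg1 Y (k, b) (s, a) from
    leg1_mul_apply X (leg1 Y) r b s a]
  by_cases h : b = a
  · subst h
    simp [leg1, Matrix.mul_apply, Finset.mul_sum]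
  · simp [leg1, h]

theorem trR2_leg1 (C : Matrix (Fin N) (Fin N) ℂ) (X : Matrix (Fin N) (Fin N) A) :
    trR2 C (leg1 X) = (∑ i, C i i) • X := by
  ext r s
  simp [trR2, leg1, mul_ite, mul_one, mul_zero, smul_ite, smul_zero,
    Finset.sum_ite_eq', Finset.sum_smul]

theorem asmul_one_mul (t : A) (X : Matrix (Fin N) (Fin N) A) :
    (t • (1 : Matrix (Fin N) (Fin N) A)) * X = t • X := by
  ext r s
  simp [Matrix.mul_apply, Matrix.one_apply, ite_mul, smul_eq_mul]

theorem fshift_inv (q z : ℂ) (hz0 : z ≠ 0) (hz1 : z ≠ 1) :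
    fshift q z⁻¹ = -(q - q⁻¹) - fshift q z := by
  have h1 : z - 1 ≠ 0 := sub_ne_zero.mpr hz1
  have h2 : z⁻¹ - 1 ≠ 0 := by
    rw [sub_ne_zero]
    intro h
    exact hz1 (by rw [← inv_inv z, h, inv_one])
  have h3 : 1 - z ≠ 0 := sub_ne_zero.mpr (Ne.symm hz1)
  simp only [fshift]
  field_simp
  ring

end Helpers3
theorem hecke_inv {n : Type*} [Fintype n] [DecidableEq n] (q : ℂ) (hq0 : q ≠ 0)
    (R : Matrix n n ℂ)
    (hHecke : (R - q • (1 : Matrix n n ℂ)) * (R + q⁻¹ • (1 : Matrix n n ℂ)) = 0) :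
    R * (R - (q - q⁻¹) • 1) = 1 ∧ R⁻¹ = R - (q - q⁻¹) • 1 := by
  have expand : (R - q • (1 : Matrix n n ℂ)) * (R + q⁻¹ • (1 : Matrix n n ℂ))
      = R * R - (q - q⁻¹) • R - (q * q⁻¹) • (1 : Matrix n n ℂ) := by
    simp only [sub_mul, mul_add, Matrix.smul_mul, Matrix.mul_smul, smul_smul, sub_smul,
      mul_one, one_mul]
    module
  have key : R * (R - (q - q⁻¹) • 1) = 1 := by
    have h2 := hHecke
    rw [expand, mul_inv_cancel₀ hq0, one_smul, sub_eq_zero] at h2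
    rw [mul_sub, Matrix.mul_smul, mul_one, h2]
  exact ⟨key, Matrix.inv_eq_right_inv key⟩

theorem gamma_zero (ω p α c x : ℂ) (hω : ω ≠ 0) (hp : p ≠ 0) (hx : x ≠ 0)
    (hα : α = (1 - p⁻¹ * p⁻¹) / ω) (hcc : c = p * p)
    (hx1 : x - 1 ≠ 0) (h2 : c / x - 1 ≠ 0) :
    ω + (-ω * x / (x - 1)) + (-ω * (c / x) / (c / x - 1))
      + (-ω * x / (x - 1)) * (-ω * (c / x) / (c / x - 1)) * α = 0 := by
  subst hα hcc
  have h2' : p * p - x ≠ 0 := by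
    intro h
    apply h2
    rw [div_sub_one hx, sub_eq_zero.mp h, sub_self, zero_div]
  have h2'' : p ^ 2 - x ≠ 0 := by rw [sq]; exact h2'
  field_simp
  ring

theorem beta_zero (ω p α c x : ℂ) (hω : ω ≠ 0) (hp : p ≠ 0) (hx : x ≠ 0)
    (hα : α = (1 - p⁻¹ * p⁻¹) / ω) (hcc : c = p * p)
    (hx1 : x - 1 ≠ 0) (h3 : c * x - 1 ≠ 0) :
    (-ω * (c * x) / (c * x - 1)) * (1 - ω * α) - (-ω * x / (x - 1))
      - (-ω * x / (x - 1)) * (-ω * (c * x) / (c * x - 1)) * α = 0 := by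
  have h1α : 1 - ω * α = p⁻¹ * p⁻¹ := by
    rw [hα, mul_div_cancel₀ _ hω]
    ring
  rw [h1α, hα, hcc]
  rw [hcc] at h3
  have h3'' : p ^ 2 * x - 1 ≠ 0 := by rw [sq]; exact h3
  field_simp
  ring

theorem beta_imp (ω p α c x : ℂ) (hω : ω ≠ 0) (hp : p ≠ 0) (hx : x ≠ 0)
    (hα : α = (1 - p⁻¹ * p⁻¹) / ω)
    (hx1 : x - 1 ≠ 0) (h3 : c * x - 1 ≠ 0)
    (hβ : (-ω * (c * x) / (c * x - 1)) * (1 - ω * α) - (-ω * x / (x - 1))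
      - (-ω * x / (x - 1)) * (-ω * (c * x) / (c * x - 1)) * α = 0) :
    c = p * p := by
  have h1α : 1 - ω * α = p⁻¹ * p⁻¹ := by
    rw [hα, mul_div_cancel₀ _ hω]
    ring
  rw [h1α, hα] at hβ
  field_simp at hβ
  have key : (ω * ω * (p * p) * x * (x - 1) * (c * x - 1)) * (c - p * p) = 0 := by
    linear_combination (ω * p ^ 2 * (x - 1) * (c * x - 1)) * hβ
  have hne : ω * ω * (p * p) * x * (x - 1) * (c * x - 1) ≠ 0 :=
    mul_ne_zero (mul_ne_zero (mul_ne_zero (mul_ne_zero (mul_ne_zero hω hω)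
      (mul_ne_zero hp hp)) hx) hx1) h3
  rcases mul_eq_zero.mp key with h | h
  · exact absurd h hne
  · exact sub_eq_zero.mp h
/-- in an algebra of RS type with charge `c` (satisfying a nondegeneracy
condition), the first quantum power sum `Tr_R L(u)` commutes with all generators `L(v)`
iff the charge is critical: `c = q^{2(m−n)}`. -/
theorem first_power_sum_central_iff_critical_charge
    {N : ℕ} {A : Type*} [Ring A] [Algebra ℂ A]
    (q : ℂ) (hq0 : q ≠ 0) (hq1 : q ≠ 1) (hqm1 : q ≠ -1)
    (m n : ℕ)
    (R : Matrix (Fin N × Fin N) (Fin N × Fin N) ℂ)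
    (hRinv : IsUnit R)
    (hbraid : op12 R * op23 R * op12 R = op23 R * op12 R * op23 R)
    (hHecke : (R - q • (1 : Matrix (Fin N × Fin N) (Fin N × Fin N) ℂ)) *
      (R + q⁻¹ • (1 : Matrix (Fin N × Fin N) (Fin N × Fin N) ℂ)) = 0)
    (C : Matrix (Fin N) (Fin N) ℂ)
    (hi : trR2 C R = (1 : Matrix (Fin N) (Fin N) ℂ))
    (hii : trR C (1 : Matrix (Fin N) (Fin N) ℂ) = alphaHecke q m n)
    (hiii1 : ∀ X : Matrix (Fin N) (Fin N) A,
      trR2 C (emb R * leg1 X * emb R⁻¹) = trR C X • (1 : Matrix (Fin N) (Fin N) A))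
    (hiii2 : ∀ X : Matrix (Fin N) (Fin N) A,
      trR2 C (emb R⁻¹ * leg1 X * emb R) = trR C X • (1 : Matrix (Fin N) (Fin N) A))
    (c : ℂ) (hc : c ≠ 0)
    (L : ℂ → Matrix (Fin N) (Fin N) A)
    (hRS : ∀ u v : ℂ, u ≠ 0 → v ≠ 0 →
      u / v ≠ 1 → v * c / u ≠ 1 → u * c / v ≠ 1 → v / u ≠ 1 →
      emb (R + fshift q (u / v) • (1 : Matrix (Fin N × Fin N) (Fin N × Fin N) ℂ)) *
          leg1 (L u) *
          emb (R + fshift q (v * c / u) • (1 : Matrix (Fin N × Fin N) (Fin N × Fin N) ℂ)) *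
          leg1 (L v) =
        leg1 (L v) *
          emb (R + fshift q (u * c / v) • (1 : Matrix (Fin N × Fin N) (Fin N × Fin N) ℂ)) *
          leg1 (L u) *
          emb (R + fshift q (v / u) • (1 : Matrix (Fin N × Fin N) (Fin N × Fin N) ℂ)))
    (hnondeg : ∀ u v : ℂ, u ≠ 0 → v ≠ 0 →
      u / v ≠ 1 → v * c / u ≠ 1 → u * c / v ≠ 1 → v / u ≠ 1 → u ≠ v →
      ∀ lam mu : ℂ, lam • (L u * L v) + mu • (L v * L u) = 0 → lam = 0 ∧ mu = 0) :
    (∀ u v : ℂ, u ≠ 0 → v ≠ 0 →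
        u / v ≠ 1 → v * c / u ≠ 1 → u * c / v ≠ 1 → v / u ≠ 1 →
        trR C (L u) • L v = L v * (trR C (L u) • (1 : Matrix (Fin N) (Fin N) A)))
      ↔ c = q ^ (2 * ((m : ℤ) - n)) := by
  classical
  set ω : ℂ := q - q⁻¹ with hωdef
  set α : ℂ := alphaHecke q m n with hαdef
  set p : ℂ := q ^ ((m : ℤ) - n) with hpdef
  have hp : p ≠ 0 := zpow_ne_zero _ hq0
  have hω : ω ≠ 0 := by
    rw [hωdef]
    intro h
    have hq : q = q⁻¹ := sub_eq_zero.mp h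
    have h2 : q * q = 1 := by nth_rewrite 2 [hq]; exact mul_inv_cancel₀ hq0
    rcases mul_self_eq_one_iff.mp h2 with h3 | h3
    · exact hq1 h3
    · exact hqm1 h3
  have htrC : (∑ i, C i i) = α := by rw [← trR_one' C, hii]
  have hcritval : q ^ (2 * ((m : ℤ) - n)) = p * p := by
    rw [two_mul, zpow_add₀ hq0]
  have hq_nm : q ^ ((n : ℤ) - m) = p⁻¹ := by
    rw [hpdef, ← _root_.zpow_neg]
    congr 1
    ring
  have hωα : ω * α = 1 - p⁻¹ * p⁻¹ := by
    have h1 : α = p⁻¹ * (p - p⁻¹) / ω := by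
      rw [hαdef, alphaHecke, hq_nm, ← hpdef, ← hωdef]
    rw [h1, mul_div_cancel₀ _ hω]
    field_simp [hp]
  have hα : α = (1 - p⁻¹ * p⁻¹) / ω := by
    rw [← hωα, mul_comm, mul_div_assoc, div_self hω, mul_one]
  have fs : ∀ z : ℂ, fshift q z = -ω * z / (z - 1) := fun z => by rw [fshift, hωdef]
  obtain ⟨hRone, hRinveq⟩ := hecke_inv q hq0 R hHecke
  have hEmbInv : (emb R⁻¹ : Matrix (Fin N × Fin N) (Fin N × Fin N) A) = emb R - ω • 1 := by
    rw [hRinveq, emb_sub, emb_smul, emb_one]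
  have e1 : trR2 C (emb R : Matrix (Fin N × Fin N) (Fin N × Fin N) A) = 1 := by
    rw [trR2_emb, hi, emb_one]
  have e2 : trR2 C (emb R⁻¹ : Matrix (Fin N × Fin N) (Fin N × Fin N) A)
      = (1 : Matrix (Fin N) (Fin N) A) - (ω * α) • 1 := by
    rw [hEmbInv, trR2_sub, trR2_csmul, trR2_one', htrC, e1, smul_smul]
  have master : ∀ u v : ℂ, u ≠ 0 → v ≠ 0 → u / v ≠ 1 → v * c / u ≠ 1 → u * c / v ≠ 1 →
      v / u ≠ 1 →
      trR C (L u) • L v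
        + (ω + fshift q (u/v) + fshift q (v*c/u) + fshift q (u/v) * fshift q (v*c/u) * α)
          • (L u * L v)
      = L v * (trR C (L u) • 1)
        + (fshift q (u*c/v) * (1 - ω*α) - fshift q (u/v)
            - fshift q (u/v) * fshift q (u*c/v) * α) • (L v * L u) := by
    intro u v hu hv h1 h2 h3 h4
    have E := hRS u v hu hv h1 h2 h3 h4
    have embsimp : ∀ s : ℂ,
        emb (R + s • (1 : Matrix (Fin N × Fin N) (Fin N × Fin N) ℂ))
          = (emb R : Matrix (Fin N × Fin N) (Fin N × Fin N) A) + s • 1 := fun s => by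
      rw [emb_add, emb_smul, emb_one]
    have hb' : fshift q (v/u) = -ω - fshift q (u/v) := by
      have hvu : v/u = (u/v)⁻¹ := (inv_div u v).symm
      rw [hvu, fshift_inv q _ (div_ne_zero hu hv) h1, hωdef]
    rw [embsimp, embsimp, embsimp, embsimp, hb'] at E
    set a := fshift q (u/v) with hadef
    set b := fshift q (v*c/u) with hbdef
    set a' := fshift q (u*c/v) with ha'def
    have expandL : ((emb R : Matrix (Fin N × Fin N) (Fin N × Fin N) A) + a • 1)
          * leg1 (L u) * (emb R + b • 1) * leg1 (L v)
        = emb R * leg1 (L u) * emb R⁻¹ * leg1 (L v)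
          + ω • (emb R * leg1 (L u * L v))
          + a • (leg1 (L u) * (emb R * leg1 (L v)))
          + b • (emb R * leg1 (L u * L v))
          + (a * b) • leg1 (L u * L v) := by
      rw [hEmbInv, leg1_mul]
      simp only [add_mul, mul_add, sub_mul, mul_sub, smul_mul_assoc, mul_smul_comm,
        mul_one, one_mul, smul_smul, smul_sub, smul_add, mul_assoc]
      module
    have expandR : leg1 (L v) * ((emb R : Matrix (Fin N × Fin N) (Fin N × Fin N) A) + a' • 1)
          * leg1 (L u) * (emb R + (-ω - a) • 1)
        = leg1 (L v) * (emb R * leg1 (L u) * emb R⁻¹)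
          + a' • (leg1 (L v * L u) * emb R⁻¹)
          + (-a) • (leg1 (L v) * (emb R * leg1 (L u)))
          + (-(a * a')) • leg1 (L v * L u) := by
      rw [hEmbInv, leg1_mul]
      simp only [add_mul, mul_add, sub_mul, mul_sub, smul_mul_assoc, mul_smul_comm,
        mul_one, one_mul, smul_smul, smul_sub, smul_add, mul_assoc]
      module
    rw [expandL, expandR] at E
    have TE := congrArg (trR2 C) E
    simp only [trR2_add, trR2_csmul, trR2_mul_leg1, trR2_leg1_mul, trR2_leg1, hiii1, e1, e2,
      htrC, asmul_one_mul, one_mul, mul_one, mul_sub, mul_smul_comm, smul_smul, smul_sub] at TE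
    have hL : (ω + a + b + a*b*α) • (L u * L v)
        = ω • (L u * L v) + a • (L u * L v) + b • (L u * L v) + (a*b*α) • (L u * L v) := by
      module
    have hR : (a' * (1 - ω*α) - a - a*a'*α) • (L v * L u)
        = (a' • (L v * L u) - (a' * (ω * α)) • (L v * L u)) + -a • (L v * L u)
          + (-(a*a') * α) • (L v * L u) := by
      module
    rw [hL, hR]
    simp only [add_assoc] at TE ⊢
    exact TE
  constructor
  · -- forward
    intro hcomm
    obtain ⟨x, hx⟩ := Infinite.exists_notMem_finset ({0, 1, c, c⁻¹} : Finset ℂ)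
    simp only [Finset.mem_insert, Finset.mem_singleton, not_or] at hx
    obtain ⟨hx0, hx1, hxc, hxci⟩ := hx
    have hu : x ≠ 0 := hx0
    have hv : (1 : ℂ) ≠ 0 := one_ne_zero
    have h1 : x / 1 ≠ 1 := by rwa [div_one]
    have h2 : 1 * c / x ≠ 1 := by
      rw [one_mul]
      intro h
      rw [div_eq_iff hx0, one_mul] at h
      exact hxc h.symm
    have h3 : x * c / 1 ≠ 1 := by
      rw [div_one]
      intro h
      apply hxci
      have h' := congrArg (· * c⁻¹) h
      simpa [mul_assoc, mul_inv_cancel₀ hc] using h'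
    have h4 : 1 / x ≠ 1 := by
      rw [one_div]
      exact fun h => hx1 (by rw [← inv_inv x, h, inv_one])
    have huv : x ≠ (1 : ℂ) := hx1
    have hM := master x 1 hu hv h1 h2 h3 h4
    have hC := hcomm x 1 hu hv h1 h2 h3 h4
    rw [hC] at hM
    have hzero : (ω + fshift q (x/1) + fshift q (1*c/x) + fshift q (x/1) * fshift q (1*c/x) * α)
          • (L x * L 1)
        + (-(fshift q (x*c/1) * (1 - ω*α) - fshift q (x/1)
            - fshift q (x/1) * fshift q (x*c/1) * α)) • (L 1 * L x) = 0 := by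
      rw [neg_smul, add_neg_eq_zero]
      exact add_left_cancel hM
    obtain ⟨hγ, hβ⟩ := hnondeg x 1 hu hv h1 h2 h3 h4 huv _ _ hzero
    rw [hcritval]
    rw [neg_eq_zero] at hβ
    simp only [div_one] at hβ h3
    rw [mul_comm x c] at hβ h3
    rw [fs, fs] at hβ
    have hx1' : x - 1 ≠ 0 := sub_ne_zero.mpr hx1
    have hxc1 : c * x - 1 ≠ 0 := sub_ne_zero.mpr h3
    exact beta_imp ω p α c x hω hp hx0 hα hx1' hxc1 hβ
  · -- backward
    intro hc' u v hu hv h1 h2 h3 h4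
    rw [hcritval] at hc'
    have hM := master u v hu hv h1 h2 h3 h4
    have hx1 : u/v - 1 ≠ 0 := sub_ne_zero.mpr h1
    have hvc : v*c/u = c/(u/v) := by
      field_simp
    have h2' : c/(u/v) - 1 ≠ 0 := sub_ne_zero.mpr (by rw [← hvc]; exact h2)
    have hcx : u*c/v = c*(u/v) := by ring
    have h3' : c*(u/v) - 1 ≠ 0 := sub_ne_zero.mpr (by rw [← hcx]; exact h3)
    have hγ : ω + fshift q (u/v) + fshift q (v*c/u) + fshift q (u/v) * fshift q (v*c/u) * α
        = 0 := by
      rw [hvc, fs, fs]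
      exact gamma_zero ω p α c (u/v) hω hp (div_ne_zero hu hv) hα hc' hx1 h2'
    have hβ : fshift q (u*c/v) * (1 - ω*α) - fshift q (u/v)
        - fshift q (u/v) * fshift q (u*c/v) * α = 0 := by
      rw [hcx, fs, fs]
      exact beta_zero ω p α c (u/v) hω hp (div_ne_zero hu hv) hα hc' hx1 h3'
    rw [hγ, hβ, zero_smul, zero_smul, add_zero, add_zero] at hM
    exact hM
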